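/- arXiv:math/0308294 — 12 statements merged into one kernel-verified Lean document; each statement's English description precedes it below -/
import Mathlib

section
/- Let X be a compact metric space and f : X → X a homeomorphism. Then f is positively expansive (i.e., there exists ρ > 0 such that for all distinct x, y ∈ X there exists n ≥ 0 with d(fⁿ(x), fⁿ(y)) > ρ) if and only if X is finite. -/
open Filter Topology

theorem stmt0 {X : Type*} [MetricSpace X] [CompactSpace X] (f : X ≃ₜ X) :
    (∃ ρ > (0:ℝ), ∀ x y : X, x ≠ y → ∃ n : ℕ, ρ < dist ((⇑f)^[n] x) ((⇑f)^[n] y)) ↔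
      Finite X := by
  classical
  constructor
  · rintro ⟨ρ, hρ, hexp⟩
    set g : X → X := ⇑f.symm with hgdef
    -- iterate identities
    have hgf : ∀ (n : ℕ) (x : X), g^[n] ((⇑f)^[n] x) = x := by
      intro n
      induction n with
      | zero => intro x; simp
      | succ n ih =>
        intro x
        rw [Function.iterate_succ_apply' (⇑f), Function.iterate_succ_apply g]
        have : g (f ((⇑f)^[n] x)) = (⇑f)^[n] x := f.symm_apply_apply _
        rw [this, ih]
    have hfg1 : ∀ (m : ℕ) (x : X), f (g^[m+1] x) = g^[m] x := by
      intro m x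
      rw [Function.iterate_succ_apply' g]
      exact f.apply_symm_apply _
    have hfgm : ∀ (n m : ℕ) (x : X), n ≤ m → (⇑f)^[n] (g^[m] x) = g^[m-n] x := by
      intro n
      induction n with
      | zero => intro m x _; simp
      | succ n ih =>
        intro m x hnm
        obtain ⟨k, rfl⟩ : ∃ k, m = k + 1 := ⟨m - 1, by omega⟩
        rw [Function.iterate_succ_apply (⇑f), hfg1 k x, ih k x (by omega)]
        congr 1
        omega
    -- uniform expansivity, with n ≥ 1
    have ue : ∀ ε : ℝ, 0 < ε → ∃ N : ℕ, ∀ x y : X, ε ≤ dist x y →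
        ∃ n : ℕ, 1 ≤ n ∧ n ≤ N ∧ ρ < dist ((⇑f)^[n] x) ((⇑f)^[n] y) := by
      intro ε hε
      set K : Set (X × X) := {p | ε ≤ dist p.1 p.2} with hK
      have hKc : IsCompact K :=
        (isClosed_le continuous_const (continuous_fst.dist continuous_snd)).isCompact
      set U : ℕ → Set (X × X) := fun n =>
        {p | ρ < dist ((⇑f)^[n+1] p.1) ((⇑f)^[n+1] p.2)} with hU
      have hUopen : ∀ n, IsOpen (U n) := by
        intro n
        exact isOpen_lt continuous_const
          (((f.continuous.iterate (n+1)).comp continuous_fst).dist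
            ((f.continuous.iterate (n+1)).comp continuous_snd))
      have hcover : K ⊆ ⋃ n, U n := by
        intro p hp
        have hne : p.1 ≠ p.2 := by
          have : (0:ℝ) < dist p.1 p.2 := lt_of_lt_of_le hε hp
          exact dist_pos.mp this
        have hne' : f p.1 ≠ f p.2 := fun h => hne (f.injective h)
        obtain ⟨n, hn⟩ := hexp (f p.1) (f p.2) hne'
        refine Set.mem_iUnion.mpr ⟨n, ?_⟩
        have e1 : (⇑f)^[n+1] p.1 = (⇑f)^[n] (f p.1) := Function.iterate_succ_apply (⇑f) n p.1
        have e2 : (⇑f)^[n+1] p.2 = (⇑f)^[n] (f p.2) := Function.iterate_succ_apply (⇑f) n p.2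
        simp only [hU, Set.mem_setOf_eq, e1, e2]
        exact hn
      obtain ⟨t, ht⟩ := hKc.elim_finite_subcover U hUopen hcover
      refine ⟨t.sup id + 1, fun x y hxy => ?_⟩
      have hmem : (x, y) ∈ K := hxy
      obtain ⟨n, hn, hnU⟩ := Set.mem_iUnion₂.mp (ht hmem)
      exact ⟨n + 1, by omega, by have := Finset.le_sup (f := id) hn; simp at this; omega, hnU⟩
    -- uniform continuity ladder for g
    have hgu : UniformContinuous g :=
      CompactSpace.uniformContinuous_of_continuous f.symm.continuous
    have hdelta : ∀ k : ℕ, ∃ δ : ℝ, 0 < δ ∧ δ ≤ ρ ∧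
        ∀ a b : X, dist a b ≤ δ → ∀ m ≤ k, dist (g^[m] a) (g^[m] b) ≤ ρ := by
      intro k
      induction k with
      | zero =>
        refine ⟨ρ, hρ, le_refl _, fun a b hab m hm => ?_⟩
        interval_cases m
        simpa using hab
      | succ k ih =>
        obtain ⟨δk, hδk0, hδkρ, hδk⟩ := ih
        obtain ⟨δ', hδ'0, hδ'⟩ := Metric.uniformContinuous_iff.mp hgu δk hδk0
        refine ⟨min δk (δ'/2), by positivity, le_trans (min_le_left _ _) hδkρ,
          fun a b hab m hm => ?_⟩
        match m with
        | 0 =>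
          simp only [Function.iterate_zero, id_eq]
          exact le_trans hab (le_trans (min_le_left _ _) hδkρ)
        | (j+1) =>
          rw [Function.iterate_succ_apply g, Function.iterate_succ_apply g]
          have h1 : dist a b < δ' := lt_of_le_of_lt (le_trans hab (min_le_right _ _)) (by linarith)
          have h2 : dist (g a) (g b) ≤ δk := (hδ' h1).le
          exact hδk (g a) (g b) h2 j (by omega)
    obtain ⟨N1, hN1⟩ := ue ρ hρ
    obtain ⟨δ, hδ0, hδρ, hδ⟩ := hdelta N1
    -- Claim A: small pairs stay ρ-close under all backward iterates
    have claimA : ∀ a b : X, dist a b ≤ δ → ∀ m : ℕ, dist (g^[m] a) (g^[m] b) ≤ ρ := by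
      intro a b hab m
      induction m using Nat.strong_induction_on with
      | _ m ih =>
        by_contra hcon
        push_neg at hcon
        have hmN1 : ¬ m ≤ N1 := fun h => absurd (hδ a b hab m h) (not_le.mpr hcon)
        obtain ⟨n, hn1, hnN, hlt⟩ := hN1 _ _ hcon.le
        have hnm : n ≤ m := by omega
        rw [hfgm n m a hnm, hfgm n m b hnm] at hlt
        exact absurd (ih (m - n) (by omega)) (not_le.mpr hlt)
    -- Claim B: small pairs shrink backwards, uniformly
    have claimB : ∀ ε : ℝ, 0 < ε → ∃ M : ℕ, ∀ a b : X, dist a b ≤ δ →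
        ∀ n : ℕ, M ≤ n → dist (g^[n] a) (g^[n] b) < ε := by
      intro ε hε
      obtain ⟨N, hN⟩ := ue ε hε
      refine ⟨N, fun a b hab n hn => ?_⟩
      by_contra hcon
      push_neg at hcon
      obtain ⟨j, hj1, hjN, hlt⟩ := hN _ _ hcon
      have hjn : j ≤ n := le_trans hjN hn
      rw [hfgm j n a hjn, hfgm j n b hjn] at hlt
      exact absurd (claimA a b hab (n - j)) (not_le.mpr hlt)
    -- covering number argument
    by_contra hfin
    have hinf : Infinite X := not_finite_iff_infinite.mp hfin
    have htb : TotallyBounded (Set.univ : Set X) := isCompact_univ.totallyBounded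
    obtain ⟨t, htfin, htcover⟩ := Metric.totallyBounded_iff.mp htb (δ/2) (by positivity)
    obtain ⟨s, hscard⟩ := Infinite.exists_subset_card_eq X (htfin.toFinset.card + 1)
    have hc : ∀ y : X, ∃ z ∈ htfin.toFinset, dist y z < δ/2 := by
      intro y
      have hy := htcover (Set.mem_univ y)
      simp only [Set.mem_iUnion] at hy
      obtain ⟨z, hz, hmem⟩ := hy
      exact ⟨z, htfin.mem_toFinset.mpr hz, by simpa [Metric.mem_ball] using hmem⟩
    choose c hct hcd using hc
    -- t is nonempty hence s has at least 2 elements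
    have htne : 1 ≤ htfin.toFinset.card := by
      have x0 : X := Classical.arbitrary X
      exact Finset.card_pos.mpr ⟨c x0, hct x0⟩
    have hsd : s.offDiag.Nonempty := by
      obtain ⟨a, ha, b, hb, hab⟩ := Finset.one_lt_card.mp (by omega : 1 < s.card)
      exact ⟨(a, b), Finset.mem_offDiag.mpr ⟨ha, hb, hab⟩⟩
    obtain ⟨p, hp, hpmin⟩ := s.offDiag.exists_min_image (fun p => dist p.1 p.2) hsd
    set ε := dist p.1 p.2 with hεdef
    have hε0 : 0 < ε := dist_pos.mpr (Finset.mem_offDiag.mp hp).2.2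
    obtain ⟨M, hM⟩ := claimB ε hε0
    obtain ⟨y, hy, z, hz, hyz, hcyz⟩ :=
      Finset.exists_ne_map_eq_of_card_lt_of_maps_to (t := htfin.toFinset)
        (by omega : htfin.toFinset.card < s.card)
        (fun a _ => hct ((⇑f)^[M] a))
    have hdyz : dist ((⇑f)^[M] y) ((⇑f)^[M] z) ≤ δ := by
      have h1 := hcd ((⇑f)^[M] y)
      have h2 := hcd ((⇑f)^[M] z)
      rw [hcyz] at h1
      calc dist ((⇑f)^[M] y) ((⇑f)^[M] z)
          ≤ dist ((⇑f)^[M] y) (c ((⇑f)^[M] z)) + dist (c ((⇑f)^[M] z)) ((⇑f)^[M] z) :=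
            dist_triangle _ _ _
        _ ≤ δ/2 + δ/2 := add_le_add h1.le (by rw [dist_comm]; exact h2.le)
        _ = δ := by ring
    have hlt := hM _ _ hdyz M le_rfl
    rw [hgf M y, hgf M z] at hlt
    have hge : ε ≤ dist y z := hpmin (y, z) (Finset.mem_offDiag.mpr ⟨hy, hz, hyz⟩)
    linarith
  · intro hfin
    have := Fintype.ofFinite X
    by_cases h : ∃ q : X × X, q.1 ≠ q.2
    · set T : Finset (X × X) := Finset.univ.filter (fun q : X × X => q.1 ≠ q.2) with hT
      have hTne : T.Nonempty := by
        obtain ⟨q, hq⟩ := h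
        exact ⟨q, by simp [hT, hq]⟩
      obtain ⟨q, hq, hqmin⟩ := T.exists_min_image (fun q => dist q.1 q.2) hTne
      have hqne : q.1 ≠ q.2 := by
        have := Finset.mem_filter.mp hq
        exact this.2
      refine ⟨dist q.1 q.2 / 2, by have := dist_pos.mpr hqne; linarith, fun x y hxy => ?_⟩
      refine ⟨0, ?_⟩
      simp only [Function.iterate_zero, id_eq]
      have hmem : (x, y) ∈ T := by simp [hT, hxy]
      have := hqmin (x, y) hmem
      have hd : 0 < dist q.1 q.2 := dist_pos.mpr hqne
      simp only at this
      linarith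
    · push_neg at h
      exact ⟨1, one_pos, fun x y hxy => absurd (h (x, y)) (by simpa using hxy)⟩
end

section
/- Let X be a locally compact metric space and f : X → X a continuous map. If f is bounded (there exists a compact set W such that the forward orbit of every point of X intersects W), then there exists a compact forward invariant window, i.e., a compact set W₁ with f(W₁) ⊆ W₁ such that the forward orbit of every point of X intersects W₁. -/
theorem stmt1 {X : Type*} [MetricSpace X] [LocallyCompactSpace X]
    (f : X → X) (hf : Continuous f)
    (hbdd : ∃ W : Set X, IsCompact W ∧ ∀ x : X, ∃ n : ℕ, f^[n] x ∈ W) :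
    ∃ W₁ : Set X, IsCompact W₁ ∧ f '' W₁ ⊆ W₁ ∧ ∀ x : X, ∃ n : ℕ, f^[n] x ∈ W₁ := by
  obtain ⟨W, hW, hwin⟩ := hbdd
  obtain ⟨K, hK, hWK⟩ := exists_compact_superset hW
  have hret : ∀ x : X, ∃ n, 1 ≤ n ∧ f^[n] x ∈ interior K := by
    intro x
    obtain ⟨m, hm⟩ := hwin (f x)
    exact ⟨m + 1, Nat.succ_le_succ (Nat.zero_le m),
      hWK (by rwa [Function.iterate_succ_apply])⟩
  choose n hn1 hn2 using hret
  have hcov : K ⊆ ⋃ x ∈ K, (f^[n x]) ⁻¹' (interior K) := fun y hy =>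
    Set.mem_biUnion hy (hn2 y)
  obtain ⟨t, htb, htfin, hcov'⟩ := hK.elim_finite_subcover_image
    (fun x _ => isOpen_interior.preimage (hf.iterate (n x))) hcov
  set N := htfin.toFinset.sup n with hN
  have key : ∀ x ∈ K, ∃ m, 1 ≤ m ∧ m ≤ N ∧ f^[m] x ∈ K := by
    intro x hx
    have := hcov' hx
    simp only [Set.mem_iUnion, Set.mem_preimage] at this
    obtain ⟨y, hy, hxy⟩ := this
    exact ⟨n y, hn1 y, Finset.le_sup (htfin.mem_toFinset.mpr hy), interior_subset hxy⟩
  refine ⟨⋃ j ∈ Finset.range (N + 1), f^[j] '' K, ?_, ?_, ?_⟩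
  · exact (Finset.range (N + 1)).finite_toSet.isCompact_biUnion
      (fun j _ => hK.image (hf.iterate j))
  · rintro y ⟨z, hz, rfl⟩
    simp only [Set.mem_iUnion, Finset.mem_range] at hz ⊢
    obtain ⟨j, hj, x, hx, rfl⟩ := hz
    have hfx : f (f^[j] x) = f^[j + 1] x := (Function.iterate_succ_apply' f j x).symm
    rcases lt_or_ge (j + 1) (N + 1) with h | h
    · exact ⟨j + 1, h, x, hx, hfx.symm⟩
    · have hjN : j = N := by omega
      obtain ⟨m, hm1, hmN, hmK⟩ := key x hx
      refine ⟨N + 1 - m, by omega, f^[m] x, hmK, ?_⟩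
      rw [← Function.iterate_add_apply, hfx, hjN]
      congr 1
      omega
  · intro x
    obtain ⟨m, hm⟩ := hwin x
    refine ⟨m, ?_⟩
    simp only [Set.mem_iUnion, Finset.mem_range]
    exact ⟨0, by omega, f^[m] x, interior_subset (hWK hm), rfl⟩
end

section
/- Let X be a locally compact metric space and f : X → X a continuous map. If f is bounded, then there exists a compact window W₁ with f(W₁) ⊆ int(W₁). -/
open Metric Set Function

theorem stmt2 {X : Type*} [MetricSpace X] [LocallyCompactSpace X]
    (f : X → X) (hf : Continuous f)
    (hbdd : ∃ W : Set X, IsCompact W ∧ ∀ x : X, ∃ n : ℕ, f^[n] x ∈ W) :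
    ∃ W₁ : Set X, IsCompact W₁ ∧ f '' W₁ ⊆ interior W₁ ∧
      ∀ x : X, ∃ n : ℕ, f^[n] x ∈ W₁ := by
  obtain ⟨W, hWc, hWwin⟩ := hbdd
  obtain ⟨L, hLc, hWL⟩ := exists_compact_superset hWc
  obtain ⟨L₂, hL₂c, hLL₂⟩ := exists_compact_superset hLc
  obtain ⟨δ₀, hδ₀pos, hδ₀⟩ := hLc.exists_cthickening_subset_open isOpen_interior hLL₂
  have hitcont : ∀ n : ℕ, Continuous (f^[n]) := fun n => hf.iterate n
  have hsub : (L₂ ∪ f '' L₂) ⊆ ⋃ n : ℕ, f^[n] ⁻¹' interior L := by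
    intro x _
    obtain ⟨n, hn⟩ := hWwin x
    exact mem_iUnion.2 ⟨n, hWL hn⟩
  obtain ⟨t, ht⟩ := (hL₂c.union (hL₂c.image hf)).elim_finite_subcover
    (fun n : ℕ => f^[n] ⁻¹' interior L)
    (fun n => isOpen_interior.preimage (hitcont n)) hsub
  set N : ℕ := t.sup id with hNdef
  have hret : ∀ w ∈ L₂ ∪ f '' L₂, ∃ n ≤ N, f^[n] w ∈ interior L := by
    intro w hw
    obtain ⟨n, hn, hmem⟩ := mem_iUnion₂.1 (ht hw)
    exact ⟨n, Finset.le_sup (f := id) hn, hmem⟩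
  have hRc : IsCompact (⋃ j ∈ Finset.range (N + 2), f^[j] '' L₂) :=
    (Finset.range (N + 2)).isCompact_biUnion fun j _ => hL₂c.image (hitcont j)
  set R : Set X := ⋃ j ∈ Finset.range (N + 2), f^[j] '' L₂ with hRdef
  obtain ⟨L₃, hL₃c, hRL₃⟩ := exists_compact_superset hRc
  obtain ⟨ε₀, hε₀pos, hε₀⟩ := hRc.exists_cthickening_subset_open isOpen_interior hRL₃
  set δ : ℝ := δ₀ / (N + 2) with hδdef
  set ε : ℝ := ε₀ / (N + 2) with hεdef
  have hNpos : (0:ℝ) < (N:ℝ) + 2 := by positivity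
  have hδpos : 0 < δ := div_pos hδ₀pos hNpos
  have hεpos : 0 < ε := div_pos hε₀pos hNpos
  have hδbig : ((N:ℝ) + 1) * δ ≤ δ₀ := by
    rw [hδdef, ← mul_div_assoc, div_le_iff₀ hNpos]
    nlinarith [hδ₀pos.le]
  have hεbig : ((N:ℝ) + 1) * ε ≤ ε₀ := by
    rw [hεdef, ← mul_div_assoc, div_le_iff₀ hNpos]
    nlinarith [hε₀pos.le]
  have hone : ∀ j : ℕ, j ≤ N → (1:ℝ) ≤ (N:ℝ) + 1 - j := by
    intro j hj
    have : (j:ℝ) ≤ (N:ℝ) := Nat.cast_le.2 hj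
    linarith
  set P : ℕ → Set X := fun j => thickening (((N:ℝ) + 1 - j) * δ) L with hPdef
  set C : ℕ → Set X := fun i => thickening (((N:ℝ) + 1 - i) * ε) R with hCdef
  have hPpos : ∀ j : ℕ, j ≤ N → 0 < ((N:ℝ) + 1 - j) * δ := fun j hj =>
    mul_pos (lt_of_lt_of_le one_pos (hone j hj)) hδpos
  have hCpos : ∀ i : ℕ, i ≤ N → 0 < ((N:ℝ) + 1 - i) * ε := fun i hi =>
    mul_pos (lt_of_lt_of_le one_pos (hone i hi)) hεpos
  set A : ℕ → Set X := fun m =>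
    (⋂ i ∈ Finset.range m, f^[i] ⁻¹' C i) ∩ f^[m] ⁻¹' P m with hAdef
  set U : Set X := ⋃ m ∈ Finset.range (N + 1), A m with hUdef
  have hUopen : IsOpen U := isOpen_biUnion fun m _ =>
    (isOpen_biInter_finset fun i _ => isOpen_thickening.preimage (hitcont i)).inter
      (isOpen_thickening.preimage (hitcont m))
  -- W ⊆ U
  have hWU : W ⊆ U := by
    intro x hx
    refine mem_biUnion (Finset.mem_range.2 (Nat.succ_pos N)) ?_
    refine ⟨by simp, ?_⟩
    show f^[0] x ∈ P 0
    rw [Function.iterate_zero_apply]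
    exact self_subset_thickening (by simpa using hPpos 0 (Nat.zero_le N)) L
      (interior_subset (hWL hx))
  -- closure of components
  have hclosA : ∀ m : ℕ, closure (A m) ⊆
      (⋂ i ∈ Finset.range m, f^[i] ⁻¹' closure (C i)) ∩ f^[m] ⁻¹' closure (P m) := by
    intro m
    refine closure_minimal ?_ ?_
    · exact inter_subset_inter
        (iInter₂_mono fun i _ => preimage_mono subset_closure)
        (preimage_mono subset_closure)
    · exact (isClosed_biInter fun i _ =>
        isClosed_closure.preimage (hitcont i)).inter
        (isClosed_closure.preimage (hitcont m))
  have hclosP : ∀ j : ℕ, closure (P j) ⊆ cthickening (((N:ℝ) + 1 - j) * δ) L :=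
    fun j => closure_thickening_subset_cthickening _ L
  have hclosC : ∀ i : ℕ, closure (C i) ⊆ cthickening (((N:ℝ) + 1 - i) * ε) R :=
    fun i => closure_thickening_subset_cthickening _ R
  -- closure U is bounded
  have hUsub : U ⊆ P 0 ∪ C 0 := by
    intro x hx
    obtain ⟨m, _, hxm⟩ := mem_iUnion₂.1 hx
    rcases Nat.eq_zero_or_pos m with rfl | hm
    · left
      have := hxm.2
      simpa using this
    · right
      have := mem_iInter₂.1 hxm.1 0 (Finset.mem_range.2 hm)
      simpa using this
  have hclUsub : closure U ⊆ L₂ ∪ L₃ := by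
    refine (closure_mono hUsub).trans ?_
    rw [closure_union]
    refine union_subset_union ?_ ?_
    · refine ((hclosP 0).trans ?_)
      refine (cthickening_mono ?_ L).trans ((hδ₀).trans interior_subset)
      push_cast
      linarith [hδbig]
    · refine ((hclosC 0).trans ?_)
      refine (cthickening_mono ?_ R).trans ((hε₀).trans interior_subset)
      push_cast
      linarith [hεbig]
  have hclUc : IsCompact (closure U) :=
    (hL₂c.union hL₃c).of_isClosed_subset isClosed_closure hclUsub
  -- main : f '' closure U ⊆ U
  have hmain : f '' closure U ⊆ U := by
    rintro _ ⟨y, hy, rfl⟩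
    rw [hUdef, Finset.closure_biUnion] at hy
    obtain ⟨m, hmN, hym⟩ := mem_iUnion₂.1 hy
    have hymm := hclosA m hym
    rcases m with _ | k
    · -- m = 0 : y is near L, use the return property
      have hyP0 : y ∈ closure (P 0) := by
        have := hymm.2
        simpa using this
      have hyL₂ : y ∈ L₂ := by
        have h1 : y ∈ cthickening (((N:ℝ) + 1 - (0:ℕ)) * δ) L := hclosP 0 hyP0
        have h2 : cthickening (((N:ℝ) + 1 - (0:ℕ)) * δ) L ⊆ cthickening δ₀ L := by
          refine cthickening_mono ?_ L
          push_cast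
          linarith [hδbig]
        exact interior_subset (hδ₀ (h2 h1))
      obtain ⟨n, hnN, hmem⟩ := hret (f y) (Or.inr ⟨y, hyL₂, rfl⟩)
      refine mem_biUnion (Finset.mem_range.2 (Nat.lt_succ_of_le hnN)) ?_
      constructor
      · refine mem_iInter₂.2 fun i hi => ?_
        have hin : i < n := Finset.mem_range.1 hi
        have hiN : i ≤ N := hin.le.trans hnN
        have h1 : f^[i] (f y) ∈ f^[i + 1] '' L₂ :=
          ⟨y, hyL₂, Function.iterate_succ_apply f i y⟩
        have h2 : f^[i + 1] '' L₂ ⊆ R := by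
          intro z hz
          rw [hRdef]
          exact mem_iUnion₂.2 ⟨i + 1, Finset.mem_range.2 (by omega), hz⟩
        exact self_subset_thickening (hCpos i hiN) R (h2 h1)
      · show f^[n] (f y) ∈ P n
        exact self_subset_thickening (hPpos n hnN) L (interior_subset hmem)
    · -- m = k + 1 : shift the witness
      have hkN : k + 1 ≤ N := Nat.le_of_lt_succ (Finset.mem_range.1 hmN)
      refine mem_iUnion₂.2 ⟨k, Finset.mem_range.2 (by omega), ?_, ?_⟩
      · refine mem_iInter₂.2 fun i hi => ?_
        have hik : i < k := Finset.mem_range.1 hi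
        have h1 : f^[i] (f y) ∈ closure (C (i + 1)) := by
          rw [← Function.iterate_succ_apply]
          exact mem_iInter₂.1 hymm.1 (i + 1) (Finset.mem_range.2 (by omega))
        have h2 : cthickening (((N:ℝ) + 1 - (i + 1 : ℕ)) * ε) R ⊆
            thickening (((N:ℝ) + 1 - i) * ε) R := by
          refine cthickening_subset_thickening' (hCpos i (by omega)) ?_ R
          push_cast
          have : (0:ℝ) < ε := hεpos
          nlinarith
        exact h2 ((hclosC (i + 1)) h1)
      · show f^[k] (f y) ∈ P k
        have h1 : f^[k] (f y) ∈ closure (P (k + 1)) := by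
          rw [← Function.iterate_succ_apply]
          exact hymm.2
        have h2 : cthickening (((N:ℝ) + 1 - (k + 1 : ℕ)) * δ) L ⊆
            thickening (((N:ℝ) + 1 - k) * δ) L := by
          refine cthickening_subset_thickening' (hPpos k (by omega)) ?_ L
          push_cast
          have : (0:ℝ) < δ := hδpos
          nlinarith
        exact h2 ((hclosP (k + 1)) h1)
  refine ⟨closure U, hclUc, ?_, ?_⟩
  · exact hmain.trans (interior_maximal subset_closure hUopen)
  · intro x
    obtain ⟨n, hn⟩ := hWwin x
    exact ⟨n, subset_closure (hWU hn)⟩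
end

section
/- Let X be a locally compact metric space and f : X → X a continuous map. If there exists a compact set V such that for every x ∈ X the ω-limit set ω(x) is nonempty and contained in V, then f is bounded (admits a compact window). -/
theorem stmt3 {X : Type*} [MetricSpace X] [LocallyCompactSpace X]
    (f : X → X) (hf : Continuous f)
    (h : ∃ V : Set X, IsCompact V ∧ ∀ x : X,
      (⋂ N : ℕ, closure (⋃ n > N, {f^[n] x})).Nonempty ∧
      (⋂ N : ℕ, closure (⋃ n > N, {f^[n] x})) ⊆ V) :
    ∃ W : Set X, IsCompact W ∧ ∀ x : X, ∃ n : ℕ, f^[n] x ∈ W := by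
  obtain ⟨V, hV, h⟩ := h
  obtain ⟨K, hK, hVK⟩ := exists_compact_superset hV
  refine ⟨K, hK, fun x => ?_⟩
  obtain ⟨y, hy⟩ := (h x).1
  have hyK : y ∈ interior K := hVK ((h x).2 hy)
  have hy0 : y ∈ closure (⋃ n > 0, {f^[n] x}) := Set.mem_iInter.1 hy 0
  have := mem_closure_iff.1 hy0 (interior K) isOpen_interior hyK
  obtain ⟨z, hzK, hz⟩ := this
  simp only [Set.mem_iUnion, Set.mem_singleton_iff] at hz
  obtain ⟨n, _, rfl⟩ := hz
  exact ⟨n, interior_subset hzK⟩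
end

section
/- Let X be a compact metric space and f : X → X a positively expansive homeomorphism. Then the diagonal Δ = {(x,x) : x ∈ X} is a repeller for f × f : X × X → X × X; that is, there exists a compact neighborhood N of Δ with (f×f)⁻¹(N) ⊆ int(N) and such that the maximal invariant subset of N equals Δ. -/
open Function Metric

section Aux

variable {X : Type*} [MetricSpace X] [CompactSpace X]

/-- Cancellation of forward iterates against backward iterates. -/
private lemma iter_cancel (f : X ≃ₜ X) : ∀ t n : ℕ, t ≤ n → ∀ z : X,
    (⇑f)^[t] ((⇑f.symm)^[n] z) = (⇑f.symm)^[n - t] z := by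
  intro t
  induction t with
  | zero => simp
  | succ t ih =>
    intro n ht z
    obtain ⟨m, rfl⟩ : ∃ m, n = m + 1 := ⟨n - 1, by omega⟩
    rw [Function.iterate_succ_apply' (⇑f.symm) m z, Function.iterate_succ_apply,
      f.apply_symm_apply]
    simpa [Nat.succ_sub_succ] using ih m (by omega) z

/-- Uniform expansivity: if the first `M` forward iterates stay `c`-close, the points are
`α`-close. -/
private lemma unif (f : X ≃ₜ X) {c : ℝ} (hc : 0 < c)
    (hexp : ∀ x y : X, x ≠ y → ∃ n : ℕ, c < dist ((⇑f)^[n] x) ((⇑f)^[n] y))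
    {α : ℝ} (hα : 0 < α) :
    ∃ M : ℕ, ∀ x y : X,
      (∀ t, 1 ≤ t → t ≤ M → dist ((⇑f)^[t] x) ((⇑f)^[t] y) ≤ c) → dist x y < α := by
  by_contra h
  push_neg at h
  set V : ℕ → Set (X × X) := fun m =>
    {p | α ≤ dist p.1 p.2 ∧ ∀ t, 1 ≤ t → t ≤ m → dist ((⇑f)^[t] p.1) ((⇑f)^[t] p.2) ≤ c}
    with hV
  have hVmono : ∀ m, V (m + 1) ⊆ V m := by
    intro m p hp
    exact ⟨hp.1, fun t ht1 ht2 => hp.2 t ht1 (by omega)⟩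
  have hVne : ∀ m, (V m).Nonempty := by
    intro m
    obtain ⟨x, y, h1, h2⟩ := h m
    exact ⟨(x, y), h2, h1⟩
  have hVclosed : ∀ m, IsClosed (V m) := by
    intro m
    have h1 : IsClosed {p : X × X | α ≤ dist p.1 p.2} :=
      isClosed_le continuous_const (continuous_fst.dist continuous_snd)
    have h2 : ∀ t : ℕ, IsClosed {p : X × X | dist ((⇑f)^[t] p.1) ((⇑f)^[t] p.2) ≤ c} :=
      fun t => isClosed_le (((f.continuous.iterate t).comp continuous_fst).dist
        ((f.continuous.iterate t).comp continuous_snd)) continuous_const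
    have : V m = {p : X × X | α ≤ dist p.1 p.2} ∩
        ⋂ t ∈ Finset.Icc 1 m, {p : X × X | dist ((⇑f)^[t] p.1) ((⇑f)^[t] p.2) ≤ c} := by
      ext p
      simp only [hV, Set.mem_setOf_eq, Set.mem_inter_iff, Set.mem_iInter, Finset.mem_Icc]
      exact ⟨fun hp => ⟨hp.1, fun t ht => hp.2 t ht.1 ht.2⟩,
        fun hp => ⟨hp.1, fun t ht1 ht2 => hp.2 t ⟨ht1, ht2⟩⟩⟩
    rw [this]
    exact h1.inter (isClosed_biInter fun t _ => h2 t)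
  obtain ⟨p, hp⟩ := IsCompact.nonempty_iInter_of_sequence_nonempty_isCompact_isClosed V
    hVmono hVne ((hVclosed 0).isCompact) hVclosed
  simp only [Set.mem_iInter] at hp
  have hαd : α ≤ dist p.1 p.2 := (hp 0).1
  have hne : p.1 ≠ p.2 := by
    intro hEq
    rw [hEq, dist_self] at hαd
    linarith
  obtain ⟨n, hn⟩ := hexp (f p.1) (f p.2) (fun hEq => hne (f.injective hEq))
  have := (hp (n + 1)).2 (n + 1) (by omega) le_rfl
  rw [Function.iterate_succ_apply, Function.iterate_succ_apply] at this
  linarith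

/-- Uniform continuity of finitely many iterates of `f.symm`. -/
private lemma ucont (f : X ≃ₜ X) {c : ℝ} (hc : 0 < c) (M : ℕ) :
    ∃ δ > 0, ∀ t ≤ M, ∀ x y : X, dist x y < δ →
      dist ((⇑f.symm)^[t] x) ((⇑f.symm)^[t] y) ≤ c := by
  induction M with
  | zero =>
    refine ⟨c, hc, fun t ht x y hxy => ?_⟩
    interval_cases t
    simpa using hxy.le
  | succ m ih =>
    obtain ⟨δ₁, hδ₁, h1⟩ := ih
    have hu : UniformContinuous ((⇑f.symm)^[m + 1]) :=
      CompactSpace.uniformContinuous_of_continuous (f.symm.continuous.iterate (m + 1))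
    obtain ⟨δ₂, hδ₂, h2⟩ := Metric.uniformContinuous_iff.mp hu c hc
    refine ⟨min δ₁ δ₂, lt_min hδ₁ hδ₂, fun t ht x y hxy => ?_⟩
    rcases Nat.lt_or_ge t (m + 1) with h | h
    · exact h1 t (by omega) x y (lt_of_lt_of_le hxy (min_le_left _ _))
    · have ht' : t = m + 1 := by omega
      subst ht'
      exact (h2 (lt_of_lt_of_le hxy (min_le_right _ _))).le

/-- Backward iterates of `δ`-close points stay `c`-close. -/
private lemma backstable (f : X ≃ₜ X) {c : ℝ} (hc : 0 < c)
    (hexp : ∀ x y : X, x ≠ y → ∃ n : ℕ, c < dist ((⇑f)^[n] x) ((⇑f)^[n] y)) :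
    ∃ δ > 0, ∀ x y : X, dist x y < δ → ∀ n : ℕ,
      dist ((⇑f.symm)^[n] x) ((⇑f.symm)^[n] y) ≤ c := by
  obtain ⟨M, hM⟩ := unif f hc hexp hc
  obtain ⟨δ, hδ, hδp⟩ := ucont f hc M
  refine ⟨δ, hδ, fun x y hxy n => ?_⟩
  induction n using Nat.strong_induction_on with
  | _ n ih =>
    rcases Nat.lt_or_ge M n with h | h
    · refine (hM _ _ fun t ht1 ht2 => ?_).le
      rw [iter_cancel f t n (by omega), iter_cancel f t n (by omega)]
      exact ih (n - t) (by omega)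
    · exact hδp n h x y hxy

end Aux

theorem stmt5 {X : Type*} [MetricSpace X] [CompactSpace X] (f : X ≃ₜ X)
    (hexp : ∃ ρ > (0:ℝ), ∀ x y : X, x ≠ y →
      ∃ n : ℕ, ρ < dist ((⇑f)^[n] x) ((⇑f)^[n] y)) :
    ∃ N : Set (X × X), IsCompact N ∧ N ∈ nhdsSet {p : X × X | p.1 = p.2} ∧
      (⇑(f.prodCongr f)) ⁻¹' N ⊆ interior N ∧
      {p : X × X | ∀ n : ℕ, (⇑(f.prodCongr f))^[n] p ∈ N ∧
        (⇑(f.prodCongr f).symm)^[n] p ∈ N} = {p : X × X | p.1 = p.2} := by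
  obtain ⟨c, hc, hexp⟩ := hexp
  -- Step 1: X is finite.
  have hfin : Finite X := by
    by_contra hinf
    rw [not_finite_iff_infinite] at hinf
    obtain ⟨δ, hδ, hEQ⟩ := backstable f hc hexp
    -- finite cover by δ/2-balls
    obtain ⟨t, -, htf, htc⟩ := finite_cover_balls_of_compact (isCompact_univ (X := X))
      (half_pos hδ)
    set k := htf.toFinset.card with hk
    -- k+1 distinct points
    let e := Infinite.natEmbedding X
    have hei : Function.Injective e := e.injective
    -- minimal pairwise distance η
    have hDne : ((Finset.range (k + 1) ×ˢ Finset.range (k + 1)).filter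
        (fun p => p.1 ≠ p.2)).Nonempty := by
      refine ⟨(0, 1), ?_⟩
      simp only [Finset.mem_filter, Finset.mem_product, Finset.mem_range]
      refine ⟨⟨by omega, ?_⟩, by simp⟩
      -- need 1 < k + 1, i.e. k ≥ 1
      have : (Set.univ : Set X).Nonempty := ⟨e 0, trivial⟩
      rcases htf.toFinset.eq_empty_or_nonempty with hte | hte
      · exfalso
        obtain ⟨x, -⟩ := this
        have := htc (Set.mem_univ x)
        simp only [Set.mem_iUnion] at this
        obtain ⟨z, hz, -⟩ := this
        have : z ∈ htf.toFinset := htf.mem_toFinset.mpr hz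
        simp [hte] at this
      · have : 0 < k := Finset.card_pos.mpr hte
        omega
    set D := ((Finset.range (k + 1) ×ˢ Finset.range (k + 1)).filter
        (fun p => p.1 ≠ p.2)).image (fun p => dist (e p.1) (e p.2)) with hD
    have hDne' : D.Nonempty := hDne.image _
    set η := D.min' hDne' with hη
    have hηpos : 0 < η := by
      have hmem : η ∈ D := D.min'_mem hDne'
      simp only [hD, Finset.mem_image, Finset.mem_filter, Finset.mem_product] at hmem
      obtain ⟨⟨i, j⟩, ⟨-, hij⟩, hd⟩ := hmem
      rw [← hd]
      exact dist_pos.mpr fun hEq => hij (hei hEq)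
    have hηle : ∀ i j, i < k + 1 → j < k + 1 → i ≠ j → η ≤ dist (e i) (e j) := by
      intro i j hi hj hij
      refine Finset.min'_le _ _ ?_
      simp only [hD, Finset.mem_image, Finset.mem_filter, Finset.mem_product, Finset.mem_range]
      exact ⟨(i, j), ⟨⟨hi, hj⟩, hij⟩, rfl⟩
    -- shrinking time T
    obtain ⟨Mη, hMη⟩ := unif f hc hexp hηpos
    set T := Mη + 1 with hT
    have hshrink : ∀ x y : X, dist x y < δ →
        dist ((⇑f.symm)^[T] x) ((⇑f.symm)^[T] y) < η := by
      intro x y hxy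
      refine hMη _ _ fun s hs1 hs2 => ?_
      rw [iter_cancel f s T (by omega), iter_cancel f s T (by omega)]
      exact hEQ x y hxy (T - s)
    -- the points u i := f^[T] (e i)
    set u : ℕ → X := fun i => (⇑f)^[T] (e i) with hu
    have hcancel : ∀ z : X, (⇑f.symm)^[T] ((⇑f)^[T] z) = z := by
      intro z
      have := iter_cancel f.symm T T le_rfl z
      rwa [Homeomorph.symm_symm, Nat.sub_self, Function.iterate_zero_apply] at this
    -- choose cover elements
    have hch : ∀ i : ℕ, ∃ z ∈ htf.toFinset, u i ∈ ball z (δ / 2) := by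
      intro i
      have := htc (Set.mem_univ (u i))
      simp only [Set.mem_iUnion] at this
      obtain ⟨z, hz1, hz2⟩ := this
      exact ⟨z, htf.mem_toFinset.mpr hz1, hz2⟩
    choose z hz1 hz2 using hch
    -- pigeonhole
    obtain ⟨i, hi, j, hj, hij, hzij⟩ :=
      Finset.exists_ne_map_eq_of_card_lt_of_maps_to
        (s := Finset.range (k + 1)) (t := htf.toFinset)
        (by rw [Finset.card_range]; omega) (fun i _ => hz1 i)
    rw [Finset.mem_range] at hi hj
    have hdu : dist (u i) (u j) < δ := by
      have h1 : dist (u i) (z i) < δ / 2 := mem_ball.mp (hz2 i)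
      have h2 : dist (u j) (z i) < δ / 2 := by rw [hzij]; exact mem_ball.mp (hz2 j)
      calc dist (u i) (u j) ≤ dist (u i) (z i) + dist (u j) (z i) := dist_triangle_right _ _ _
        _ < δ / 2 + δ / 2 := add_lt_add h1 h2
        _ = δ := add_halves δ
    have := hshrink (u i) (u j) hdu
    rw [hu] at this
    simp only [hcancel] at this
    exact absurd this (not_lt.mpr (hηle i j hi hj hij))
  -- Step 2: discreteness, the diagonal is open.
  haveI : DiscreteTopology X := Finite.instDiscreteTopology
  set Δ : Set (X × X) := {p : X × X | p.1 = p.2} with hΔ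
  have hΔopen : IsOpen Δ := isOpen_discrete _
  have hΔclosed : IsClosed Δ := isClosed_eq continuous_fst continuous_snd
  have hFmem : ∀ p : X × X, p ∈ Δ → (f.prodCongr f) p ∈ Δ := by
    intro p hp
    simp only [hΔ, Set.mem_setOf_eq] at hp ⊢
    rw [Homeomorph.coe_prodCongr]
    simpa using congrArg f hp
  have hFmem' : ∀ p : X × X, p ∈ Δ → (f.prodCongr f).symm p ∈ Δ := by
    intro p hp
    simp only [hΔ, Set.mem_setOf_eq] at hp ⊢
    rw [Homeomorph.prodCongr_symm, Homeomorph.coe_prodCongr]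
    simpa using congrArg f.symm hp
  refine ⟨Δ, hΔclosed.isCompact, (hΔopen.mem_nhdsSet).mpr subset_rfl, ?_, ?_⟩
  · intro p hp
    rw [hΔopen.interior_eq]
    simp only [Set.mem_preimage, hΔ, Set.mem_setOf_eq] at hp
    rw [Homeomorph.coe_prodCongr] at hp
    simp only [Prod.map] at hp
    exact f.injective hp
  · ext p
    simp only [Set.mem_setOf_eq]
    constructor
    · intro h
      have := (h 0).1
      simpa using this
    · intro hp n
      have key : ∀ (g : X × X → X × X), (∀ q, q ∈ Δ → g q ∈ Δ) →
          ∀ m (q : X × X), q ∈ Δ → g^[m] q ∈ Δ := by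
        intro g hg m
        induction m with
        | zero => simpa using fun q hq => hq
        | succ m ih =>
          intro q hq
          rw [Function.iterate_succ_apply']
          exact hg _ (ih q hq)
      exact ⟨key _ hFmem n p hp, key _ hFmem' n p hp⟩
end

section
/- Let X be a compact metric space and f : X → X a positively expansive homeomorphism. Then there exists ε > 0 such that for all x, y ∈ X with d(x,y) < ε, d(f⁻ⁿ(x), f⁻ⁿ(y)) → 0 as n → ∞. -/
open Filter Topology

theorem stmt7 {X : Type*} [MetricSpace X] [CompactSpace X] (f : X ≃ₜ X)
    (hexp : ∃ ρ > (0:ℝ), ∀ x y : X, x ≠ y →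
      ∃ n : ℕ, ρ < dist ((⇑f)^[n] x) ((⇑f)^[n] y)) :
    ∃ ε > (0:ℝ), ∀ x y : X, dist x y < ε →
      Tendsto (fun n : ℕ => dist ((⇑f.symm)^[n] x) ((⇑f.symm)^[n] y)) atTop (𝓝 0) := by
  classical
  obtain ⟨c, hc, hexp⟩ := hexp
  set g : X → X := ⇑f.symm with hg
  have hfg : ∀ (k : ℕ) (z : X), (⇑f)^[k] (g^[k] z) = z :=
    fun k => (Function.LeftInverse.iterate f.apply_symm_apply k)
  have hkey : ∀ (k n : ℕ), k ≤ n → ∀ z : X, (⇑f)^[k] (g^[n] z) = g^[n-k] z := by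
    intro k n hkn z
    conv_lhs => rw [show n = k + (n - k) from (Nat.add_sub_cancel' hkn).symm]
    rw [Function.iterate_add_apply]
    exact hfg k _
  -- uniform expansivity
  have unif : ∀ δ : ℝ, 0 < δ → ∃ N : ℕ, ∀ x y : X,
      (∀ n ≤ N, dist ((⇑f)^[n] x) ((⇑f)^[n] y) ≤ c) → dist x y < δ := by
    intro δ hδ
    by_contra h
    push_neg at h
    choose x y hxy hd using h
    obtain ⟨⟨a, b⟩, -, φ, hφ, hlim⟩ :=
      (isCompact_univ : IsCompact (Set.univ : Set (X × X))).tendsto_subseq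
        (fun N => Set.mem_univ (x N, y N))
    have hxa : Tendsto (fun k => x (φ k)) atTop (𝓝 a) :=
      (continuous_fst.tendsto _).comp hlim
    have hyb : Tendsto (fun k => y (φ k)) atTop (𝓝 b) :=
      (continuous_snd.tendsto _).comp hlim
    have hab : δ ≤ dist a b :=
      ge_of_tendsto' (hxa.dist hyb) (fun k => hd (φ k))
    have hne : a ≠ b := by
      intro hEq
      rw [hEq, dist_self] at hab
      linarith
    obtain ⟨n, hn⟩ := hexp a b hne
    have hle : dist ((⇑f)^[n] a) ((⇑f)^[n] b) ≤ c := by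
      have hT : Tendsto (fun k => dist ((⇑f)^[n] (x (φ k))) ((⇑f)^[n] (y (φ k)))) atTop
          (𝓝 (dist ((⇑f)^[n] a) ((⇑f)^[n] b))) :=
        (((f.continuous.iterate n).tendsto a).comp hxa).dist
          (((f.continuous.iterate n).tendsto b).comp hyb)
      refine le_of_tendsto hT ?_
      filter_upwards [hφ.tendsto_atTop.eventually_ge_atTop n] with k hk
      exact hxy (φ k) n hk
    linarith
  -- main lemma
  have main : ∃ ε > (0:ℝ), ∀ x y : X, dist x y < ε →
      ∀ n : ℕ, dist (g^[n] x) (g^[n] y) ≤ c := by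
    by_contra h
    push_neg at h
    have hk : ∀ k : ℕ, ∃ x y : X, dist x y < 1/(k+1) ∧
        ∃ n, c < dist (g^[n] x) (g^[n] y) := by
      intro k
      obtain ⟨x, y, hxy, n, hn⟩ := h (1/(k+1)) (by positivity)
      exact ⟨x, y, hxy, n, hn⟩
    choose x y hxy hex using hk
    set m : ℕ → ℕ := fun k => Nat.find (hex k) with hm
    have hm1 : ∀ k, c < dist (g^[m k] (x k)) (g^[m k] (y k)) := fun k => Nat.find_spec (hex k)
    have hm2 : ∀ k, ∀ j < m k, dist (g^[j] (x k)) (g^[j] (y k)) ≤ c := by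
      intro k j hj
      have := Nat.find_min (hex k) hj
      exact not_lt.mp this
    have hdist0 : Tendsto (fun k => dist (x k) (y k)) atTop (𝓝 0) := by
      refine squeeze_zero (fun k => dist_nonneg) (fun k => le_of_lt (hxy k)) ?_
      exact tendsto_one_div_add_atTop_nhds_zero_nat
    have hmtop : Tendsto m atTop atTop := by
      rw [tendsto_atTop]
      intro b
      have hev : ∀ᶠ k in atTop, ∀ j ∈ Finset.range (b+1),
          dist (g^[j] (x k)) (g^[j] (y k)) ≤ c := by
        rw [eventually_all_finset]
        intro j _
        have hu : UniformContinuous (g^[j]) :=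
          CompactSpace.uniformContinuous_of_continuous (f.symm.continuous.iterate j)
        obtain ⟨δ, hδ, hδ'⟩ := Metric.uniformContinuous_iff.mp hu c hc
        filter_upwards [hdist0.eventually (gt_mem_nhds hδ)] with k hk
        have : dist (x k) (y k) < δ := by simpa using hk
        exact le_of_lt (hδ' this)
      filter_upwards [hev] with k hk
      by_contra hb
      push_neg at hb
      have := hk (m k) (Finset.mem_range.mpr (by omega))
      exact absurd this (not_le.mpr (hm1 k))
    obtain ⟨⟨a, b⟩, -, φ, hφ, hlim⟩ :=
      (isCompact_univ : IsCompact (Set.univ : Set (X × X))).tendsto_subseq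
        (fun k => Set.mem_univ (g^[m k] (x k), g^[m k] (y k)))
    have hua : Tendsto (fun k => g^[m (φ k)] (x (φ k))) atTop (𝓝 a) :=
      (continuous_fst.tendsto _).comp hlim
    have hvb : Tendsto (fun k => g^[m (φ k)] (y (φ k))) atTop (𝓝 b) :=
      (continuous_snd.tendsto _).comp hlim
    have hab : c ≤ dist a b :=
      ge_of_tendsto' (hua.dist hvb) (fun k => le_of_lt (hm1 (φ k)))
    have hj : ∀ j : ℕ, 1 ≤ j → dist ((⇑f)^[j] a) ((⇑f)^[j] b) ≤ c := by
      intro j hj1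
      have hT : Tendsto
          (fun k => dist ((⇑f)^[j] (g^[m (φ k)] (x (φ k)))) ((⇑f)^[j] (g^[m (φ k)] (y (φ k)))))
          atTop (𝓝 (dist ((⇑f)^[j] a) ((⇑f)^[j] b))) :=
        (((f.continuous.iterate j).tendsto a).comp hua).dist
          (((f.continuous.iterate j).tendsto b).comp hvb)
      refine le_of_tendsto hT ?_
      filter_upwards [(hmtop.comp hφ.tendsto_atTop).eventually_ge_atTop j] with k hk
      have hk' : j ≤ m (φ k) := hk
      rw [hkey j (m (φ k)) hk' (x (φ k)), hkey j (m (φ k)) hk' (y (φ k))]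
      exact hm2 (φ k) _ (by omega)
    have hfab : f a = f b := by
      by_contra hne
      obtain ⟨n, hn⟩ := hexp (f a) (f b) hne
      have he : ∀ z : X, (⇑f)^[n] (f z) = (⇑f)^[n+1] z := by
        intro z
        rw [Function.iterate_succ_apply]
      rw [he a, he b] at hn
      have := hj (n+1) (by omega)
      linarith
    have hab' : a = b := f.injective hfab
    rw [hab', dist_self] at hab
    linarith
  obtain ⟨ε, hε, hmain⟩ := main
  refine ⟨ε, hε, fun x y hxy => ?_⟩
  have key : ∀ n, dist (g^[n] x) (g^[n] y) ≤ c := hmain x y hxy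
  rw [Metric.tendsto_atTop]
  intro δ hδ
  obtain ⟨N, hN⟩ := unif δ hδ
  refine ⟨N, fun n hn => ?_⟩
  have hall : ∀ k ≤ N, dist ((⇑f)^[k] (g^[n] x)) ((⇑f)^[k] (g^[n] y)) ≤ c := by
    intro k hk
    have hkn : k ≤ n := le_trans hk hn
    rw [hkey k n hkn x, hkey k n hkn y]
    exact key (n - k)
  have hfin := hN _ _ hall
  rw [Real.dist_eq, sub_zero, abs_of_nonneg dist_nonneg]
  exact hfin
end

section
/- Let X be a compact metric space and U₁, ..., Uₘ a partition of X into nonempty disjoint sets, and g : X → X a homeomorphism such that diam(gⁿ(Uᵢ)) → 0 as n → ∞ for each i. Then each Uᵢ is a single point and X is finite of cardinality m. -/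
open Filter Topology

theorem stmt10 {X : Type*} [MetricSpace X] [CompactSpace X] (g : X ≃ₜ X)
    (m : ℕ) (U : Fin m → Set X)
    (hne : ∀ i, (U i).Nonempty)
    (hdisj : Pairwise (Function.onFun Disjoint U))
    (hcover : ⋃ i, U i = Set.univ)
    (hdiam : ∀ i, Tendsto (fun n : ℕ => Metric.diam ((⇑g)^[n] '' U i)) atTop (𝓝 0)) :
    (∀ i, ∃ x : X, U i = {x}) ∧ Nat.card X = m := by
  classical
  -- boundedness of everything
  have bdd : ∀ s : Set X, Bornology.IsBounded s := fun s =>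
    isCompact_univ.isBounded.subset (Set.subset_univ s)
  -- separation lemma for finsets
  have sep : ∀ s : Finset X, ∃ δ > 0, ∀ a ∈ s, ∀ b ∈ s, dist a b < δ → a = b := by
    intro s
    set P := (s ×ˢ s).filter (fun p => p.1 ≠ p.2) with hP
    rcases P.eq_empty_or_nonempty with hPe | hPne
    · refine ⟨1, one_pos, fun a ha b hb _ => ?_⟩
      by_contra hab
      have : (a, b) ∈ P := by
        simp [hP, Finset.mem_filter, Finset.mem_product, ha, hb, hab]
      rw [hPe] at this
      exact absurd this (Finset.notMem_empty _)
    · set T := P.image (fun p => dist p.1 p.2) with hT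
      have hTne : T.Nonempty := hPne.image _
      refine ⟨T.min' hTne, ?_, ?_⟩
      · have hmem := T.min'_mem hTne
        obtain ⟨p, hp, hpd⟩ := Finset.mem_image.1 hmem
        rw [← hpd]
        exact dist_pos.2 (Finset.mem_filter.1 hp).2
      · intro a ha b hb hlt
        by_contra hab
        have hmem : dist a b ∈ T := Finset.mem_image.2
          ⟨(a, b), by simp [hP, Finset.mem_filter, Finset.mem_product, ha, hb, hab], rfl⟩
        exact absurd (T.min'_le _ hmem) (not_le.2 hlt)
  -- covering by images
  have key : ∀ (n : ℕ) (x : X), ∃ i, x ∈ (⇑g)^[n] '' U i := by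
    intro n x
    have hx : (⇑g.symm)^[n] x ∈ ⋃ i, U i := by rw [hcover]; trivial
    obtain ⟨i, hi⟩ := Set.mem_iUnion.1 hx
    exact ⟨i, ⟨_, hi, Function.LeftInverse.iterate g.apply_symm_apply n x⟩⟩
  -- small diameters simultaneously
  have small : ∀ δ : ℝ, 0 < δ → ∃ n : ℕ, ∀ i, Metric.diam ((⇑g)^[n] '' U i) < δ := by
    intro δ hδ
    have : ∀ᶠ n in atTop, ∀ i, Metric.diam ((⇑g)^[n] '' U i) < δ :=
      eventually_all.2 fun i => (hdiam i).eventually_lt_const hδ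
    exact this.exists
  -- any finset has at most m elements
  have cardle : ∀ s : Finset X, s.card ≤ m := by
    intro s
    by_contra h
    push_neg at h
    obtain ⟨δ, hδ, hsep⟩ := sep s
    obtain ⟨n, hn⟩ := small δ hδ
    choose f hf using fun x => key n x
    obtain ⟨x, hx, y, hy, hxy, hfxy⟩ :=
      Finset.exists_ne_map_eq_of_card_lt_of_maps_to (t := (Finset.univ : Finset (Fin m)))
        (by simpa using h) (fun x _ => Finset.mem_univ (f x))
    apply hxy
    apply hsep x hx y hy
    calc dist x y ≤ Metric.diam ((⇑g)^[n] '' U (f x)) :=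
          Metric.dist_le_diam_of_mem (bdd _) (hf x) (hfxy ▸ hf y)
      _ < δ := hn _
  have hfin : Finite X := by
    by_contra h
    have : Infinite X := not_finite_iff_infinite.1 h
    obtain ⟨s, hs⟩ := Infinite.exists_subset_card_eq X (m + 1)
    have := cardle s
    omega
  cases nonempty_fintype X
  have hle : Nat.card X ≤ m := by
    rw [Nat.card_eq_fintype_card, ← Finset.card_univ]
    exact cardle _
  have hge : m ≤ Nat.card X := by
    have hinj : Function.Injective (fun i => (hne i).choose) := by
      intro i j hij
      by_contra hij'
      have hij2 : (hne i).choose = (hne j).choose := hij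
      exact Set.disjoint_left.1 (hdisj hij') (hne i).choose_spec
        (by rw [hij2]; exact (hne j).choose_spec)
    calc m = Nat.card (Fin m) := by simp
      _ ≤ Nat.card X := Nat.card_le_card_of_injective _ hinj
  refine ⟨?_, le_antisymm hle hge⟩
  intro i
  obtain ⟨x, hx⟩ := hne i
  refine ⟨x, Set.eq_singleton_iff_unique_mem.2 ⟨hx, ?_⟩⟩
  intro y hy
  obtain ⟨δ, hδ, hsep⟩ := sep Finset.univ
  obtain ⟨n, hn⟩ := small δ hδ
  have h1 : (⇑g)^[n] y ∈ (⇑g)^[n] '' U i := ⟨y, hy, rfl⟩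
  have h2 : (⇑g)^[n] x ∈ (⇑g)^[n] '' U i := ⟨x, hx, rfl⟩
  have heq := hsep _ (Finset.mem_univ _) _ (Finset.mem_univ _)
    (lt_of_le_of_lt (Metric.dist_le_diam_of_mem (bdd _) h1 h2) (hn i))
  exact g.injective.iterate n heq
end

section
/- Let X be a compact metric space and f : X → X a homeomorphism such that the diagonal Δ is an attractor for f × f (there exists a compact neighborhood N of Δ with (f×f)(N) ⊆ int(N) and Inv N = Δ). Then there exists ε > 0 such that d(x,y) < ε implies d(fⁿ(x), fⁿ(y)) → 0 as n → ∞. -/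
open Filter Topology Uniformity

theorem stmt12 {X : Type*} [MetricSpace X] [CompactSpace X] (f : X ≃ₜ X)
    (hattr : ∃ N : Set (X × X), IsCompact N ∧ N ∈ nhdsSet {p : X × X | p.1 = p.2} ∧
      (⇑(f.prodCongr f)) '' N ⊆ interior N ∧
      {p : X × X | ∀ n : ℕ, (⇑(f.prodCongr f))^[n] p ∈ N ∧
        (⇑(f.prodCongr f).symm)^[n] p ∈ N} = {p : X × X | p.1 = p.2}) :
    ∃ ε > (0:ℝ), ∀ x y : X, dist x y < ε →
      Tendsto (fun n : ℕ => dist ((⇑f)^[n] x) ((⇑f)^[n] y)) atTop (𝓝 0) := by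
  obtain ⟨N, hNc, hNnhds, hFN, hInv⟩ := hattr
  set F := f.prodCongr f with hFdef
  -- forward invariance of N
  have hNsub : ∀ p ∈ N, ∀ n : ℕ, (⇑F)^[n] p ∈ N := by
    intro p hp n
    induction n with
    | zero => exact hp
    | succ n ih =>
      rw [Function.iterate_succ_apply']
      exact interior_subset (hFN ⟨_, ih, rfl⟩)
  -- extract ε from the uniformity
  have hNU : N ∈ 𝓤 X := by
    rw [← nhdsSet_diagonal_eq_uniformity]
    exact hNnhds
  obtain ⟨ε, hε, hεN⟩ := Metric.mem_uniformity_dist.mp hNU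
  refine ⟨ε, hε, fun x y hxy => ?_⟩
  have hp : ((x, y) : X × X) ∈ N := hεN hxy
  set p : X × X := (x, y) with hpdef
  -- iterates of F on pairs
  have hiter : ∀ n : ℕ, (⇑F)^[n] p = ((⇑f)^[n] x, (⇑f)^[n] y) := by
    intro n
    induction n with
    | zero => rfl
    | succ n ih =>
      rw [Function.iterate_succ_apply', ih, Function.iterate_succ_apply',
        Function.iterate_succ_apply']
      rfl
  rw [Metric.tendsto_nhds]
  intro δ hδ
  by_contra hcon
  rw [Filter.not_eventually] at hcon
  have hfreq : ∃ᶠ n in atTop, (⇑F)^[n] p ∈ N ∩ {q : X × X | δ ≤ dist q.1 q.2} := by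
    refine hcon.mono fun n hn => ⟨hNsub p hp n, ?_⟩
    rw [hiter n]
    have := hn
    rw [not_lt, Real.dist_0_eq_abs, abs_of_nonneg dist_nonneg] at this
    exact this
  -- compact set K
  set K : Set (X × X) := N ∩ {q : X × X | δ ≤ dist q.1 q.2} with hKdef
  have hKc : IsCompact K :=
    hNc.inter_right (isClosed_le continuous_const (Continuous.dist continuous_fst continuous_snd))
  set L : Filter ℕ := atTop ⊓ 𝓟 {n : ℕ | (⇑F)^[n] p ∈ K} with hLdef
  have hLne : L.NeBot := Filter.frequently_iff_neBot.mp hfreq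
  have hmapK : map (fun n : ℕ => (⇑F)^[n] p) L ≤ 𝓟 K := by
    rw [Filter.le_principal_iff, Filter.mem_map]
    exact Filter.mem_inf_of_right (Filter.mem_principal_self _)
  obtain ⟨q, hqK, hqcl⟩ := hKc.exists_clusterPt hmapK
  -- q is in Inv N
  have hLat : L ≤ atTop := inf_le_left
  have hNcl : IsClosed N := hNc.isClosed
  have hcontF : Continuous (⇑F) := F.continuous
  have hqInv : ∀ m : ℕ, (⇑F)^[m] q ∈ N ∧ (⇑F.symm)^[m] q ∈ N := by
    intro m
    constructor
    · have h1 : ClusterPt ((⇑F)^[m] q) (map ((⇑F)^[m] ∘ fun n : ℕ => (⇑F)^[n] p) L) := by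
        rw [← Filter.map_map]
        exact hqcl.map (hcontF.iterate m).continuousAt Filter.tendsto_map
      have h2 : ClusterPt ((⇑F)^[m] q) (𝓟 N) := by
        refine h1.mono (Filter.le_principal_iff.mpr ?_)
        rw [Filter.mem_map]
        refine Filter.univ_mem' fun n => ?_
        show (⇑F)^[m] ((⇑F)^[n] p) ∈ N
        rw [← Function.iterate_add_apply]
        exact hNsub p hp (m + n)
      rwa [← mem_closure_iff_clusterPt, hNcl.closure_eq] at h2
    · have h1 : ClusterPt ((⇑F.symm)^[m] q) (map ((⇑F.symm)^[m] ∘ fun n : ℕ => (⇑F)^[n] p) L) := by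
        rw [← Filter.map_map]
        exact hqcl.map (F.symm.continuous.iterate m).continuousAt Filter.tendsto_map
      have hli : Function.LeftInverse (⇑F.symm) (⇑F) := F.symm_apply_apply
      have h2 : ClusterPt ((⇑F.symm)^[m] q) (𝓟 N) := by
        refine h1.mono (Filter.le_principal_iff.mpr ?_)
        rw [Filter.mem_map]
        refine Filter.mem_of_superset (hLat (Filter.eventually_ge_atTop m)) fun n hn => ?_
        show (⇑F.symm)^[m] ((⇑F)^[n] p) ∈ N
        have hmn : m ≤ n := hn
        have hnm : m + (n - m) = n := by omega
        have : (⇑F)^[n] p = (⇑F)^[m] ((⇑F)^[n - m] p) := by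
          rw [← Function.iterate_add_apply, hnm]
        rw [this, (hli.iterate m) _]
        exact hNsub p hp (n - m)
      rwa [← mem_closure_iff_clusterPt, hNcl.closure_eq] at h2
  have hqdiag : q.1 = q.2 := by
    have : q ∈ {p : X × X | p.1 = p.2} := by rw [← hInv]; exact hqInv
    exact this
  have : δ ≤ dist q.1 q.2 := hqK.2
  rw [hqdiag, dist_self] at this
  linarith
end

section
/- Let X be a locally compact metric space and f : X → X a continuous bounded map (admitting a compact window). Then f has a compact global attractor: there exists a compact invariant set Λ such that for every x ∈ X, ω(x) is nonempty and contained in Λ. -/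
open Set Function

theorem stmt13 {X : Type*} [MetricSpace X] [LocallyCompactSpace X]
    (f : X → X) (hf : Continuous f)
    (hbdd : ∃ W : Set X, IsCompact W ∧ ∀ x : X, ∃ n : ℕ, f^[n] x ∈ W) :
    ∃ Λ : Set X, IsCompact Λ ∧ f '' Λ = Λ ∧ ∀ x : X,
      (⋂ N : ℕ, closure (⋃ n > N, {f^[n] x})).Nonempty ∧
      (⋂ N : ℕ, closure (⋃ n > N, {f^[n] x})) ⊆ Λ := by
  obtain ⟨W, hW, hwin⟩ := hbdd
  obtain ⟨K, hK, hWK⟩ := exists_compact_superset hW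
  -- every point of K returns to interior K after ≥ 1 steps
  have hcov : K ⊆ ⋃ m : ℕ, {x | f^[m + 1] x ∈ interior K} := by
    intro x _
    obtain ⟨k, hk⟩ := hwin (f x)
    refine mem_iUnion.2 ⟨k, ?_⟩
    show f^[k + 1] x ∈ interior K
    rw [Function.iterate_succ_apply]
    exact hWK hk
  obtain ⟨s, hs⟩ := hK.elim_finite_subcover _
      (fun m : ℕ => isOpen_interior.preimage (hf.iterate (m + 1))) hcov
  set N := s.sup id + 1 with hNdef
  have key : ∀ x ∈ K, ∃ m, 1 ≤ m ∧ m ≤ N ∧ f^[m] x ∈ K := by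
    intro x hx
    obtain ⟨m, hm, hxm⟩ := mem_iUnion₂.1 (hs hx)
    refine ⟨m + 1, Nat.succ_le_succ (Nat.zero_le _), ?_, interior_subset hxm⟩
    have : m ≤ s.sup id := Finset.le_sup (f := id) hm
    omega
  -- the absorbing compact set A
  set A := ⋃ n ∈ Iic N, f^[n] '' K with hAdef
  have hA : IsCompact A :=
    (Set.finite_Iic N).isCompact_biUnion fun n _ => hK.image (hf.iterate n)
  have hKA : K ⊆ A := fun z hz => mem_iUnion₂.2 ⟨0, mem_Iic.2 (Nat.zero_le _), z, hz, rfl⟩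
  have hfA : ∀ a ∈ A, f a ∈ A := by
    intro a ha
    rw [hAdef, mem_iUnion₂] at ha
    obtain ⟨n, hn, z, hz, rfl⟩ := ha
    rw [mem_Iic] at hn
    rcases lt_or_eq_of_le hn with h | h
    · refine mem_iUnion₂.2 ⟨n + 1, mem_Iic.2 h, z, hz, ?_⟩
      rw [Function.iterate_succ_apply']
    · subst h
      obtain ⟨m, hm1, hmN, hmK⟩ := key z hz
      refine mem_iUnion₂.2 ⟨N + 1 - m, mem_Iic.2 (by omega), f^[m] z, hmK, ?_⟩
      have hadd : (N + 1 - m) + m = N + 1 := by omega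
      rw [← Function.iterate_add_apply, hadd, Function.iterate_succ_apply']
  -- absorption: every orbit eventually stays in A
  have habs : ∀ x : X, ∃ m₀ : ℕ, ∀ m, m₀ ≤ m → f^[m] x ∈ A := by
    intro x
    obtain ⟨n, hn⟩ := hwin x
    have aux : ∀ k, f^[n + k] x ∈ A := by
      intro k
      induction k with
      | zero => simpa using hKA (interior_subset (hWK hn))
      | succ k ih =>
        have h2 := hfA _ ih
        show f^[(n + k) + 1] x ∈ A
        rw [Function.iterate_succ_apply']
        exact h2
    refine ⟨n, fun m hm => ?_⟩
    obtain ⟨k, rfl⟩ := Nat.exists_eq_add_of_le hm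
    exact aux k
  have hcomp : ∀ n : ℕ, IsCompact (f^[n] '' A) := fun n => hA.image (hf.iterate n)
  have hanti : ∀ n, f^[n + 1] '' A ⊆ f^[n] '' A := by
    rintro n y ⟨z, hz, rfl⟩
    exact ⟨f z, hfA z hz, (Function.iterate_succ_apply f n z).symm⟩
  refine ⟨⋂ n : ℕ, f^[n] '' A, ?_, ?_, ?_⟩
  · exact (hcomp 0).of_isClosed_subset
      (isClosed_iInter fun n => (hcomp n).isClosed) (iInter_subset _ 0)
  · apply Set.Subset.antisymm
    · rintro y ⟨a, ha, rfl⟩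
      refine mem_iInter.2 fun n => ?_
      obtain ⟨z, hz, rfl⟩ := mem_iInter.1 ha n
      exact hanti n ⟨z, hz, Function.iterate_succ_apply' f n z⟩
    · intro y hy
      set C : ℕ → Set X := fun n => (f^[n] '' A) ∩ f ⁻¹' {y} with hC
      have hCne : ∀ n, (C n).Nonempty := by
        intro n
        obtain ⟨z, hz, hz2⟩ := mem_iInter.1 hy (n + 1)
        refine ⟨f^[n] z, ⟨z, hz, rfl⟩, ?_⟩
        simp only [mem_preimage, mem_singleton_iff]
        exact (Function.iterate_succ_apply' f n z).symm.trans hz2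
      have hCanti : ∀ n, C (n + 1) ⊆ C n :=
        fun n => inter_subset_inter_left _ (hanti n)
      have hCclosed : ∀ n, IsClosed (C n) :=
        fun n => (hcomp n).isClosed.inter (isClosed_singleton.preimage hf)
      have hCcomp : IsCompact (C 0) :=
        (hcomp 0).inter_right (isClosed_singleton.preimage hf)
      obtain ⟨x, hx⟩ := IsCompact.nonempty_iInter_of_sequence_nonempty_isCompact_isClosed
        C hCanti hCne hCcomp hCclosed
      refine ⟨x, mem_iInter.2 fun n => (mem_iInter.1 hx n).1, ?_⟩
      exact mem_singleton_iff.1 (mem_preimage.1 (mem_iInter.1 hx 0).2)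
  · intro x
    set T : ℕ → Set X := fun N => closure (⋃ n > N, {f^[n] x}) with hT
    have hTanti : ∀ M M', M ≤ M' → T M' ⊆ T M := by
      intro M M' h
      apply closure_mono
      exact biUnion_subset_biUnion_left fun n hn => lt_of_le_of_lt h hn
    have hTne : ∀ M, (T M).Nonempty := by
      intro M
      refine ⟨f^[M + 1] x, subset_closure ?_⟩
      exact mem_biUnion (Nat.lt_succ_self M) rfl
    obtain ⟨m₀, hm₀⟩ := habs x
    have hTsub : ∀ n : ℕ, T (m₀ + n) ⊆ f^[n] '' A := by
      intro n
      apply closure_minimal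
      · intro y hy
        simp only [mem_iUnion, mem_singleton_iff] at hy
        obtain ⟨m, hm, rfl⟩ := hy
        refine ⟨f^[m - n] x, hm₀ _ (by omega), ?_⟩
        rw [← Function.iterate_add_apply]
        congr 1
        omega
      · exact (hcomp n).isClosed
    have hT0comp : IsCompact (T (m₀ + 0)) := by
      refine hA.of_isClosed_subset isClosed_closure ?_
      have h0 := hTsub 0
      simpa using h0
    constructor
    · have hkey := IsCompact.nonempty_iInter_of_sequence_nonempty_isCompact_isClosed
        (fun n => T (m₀ + n)) (fun n => hTanti _ _ (by omega)) (fun n => hTne _)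
        hT0comp (fun n => isClosed_closure)
      obtain ⟨p, hp⟩ := hkey
      refine ⟨p, mem_iInter.2 fun M => ?_⟩
      exact hTanti M (m₀ + M) (by omega) (mem_iInter.1 hp M)
    · intro p hp
      refine mem_iInter.2 fun n => ?_
      exact hTsub n (mem_iInter.1 hp (m₀ + n))
end

section
/- Let X be a compact metric space and f : X → X a homeomorphism. Then f is expansive (there exists ρ > 0 such that d(fⁿ(x), fⁿ(y)) ≤ ρ for all n ∈ ℤ implies x = y) if and only if the diagonal Δ is an isolated invariant set for f × f, i.e., there is a compact neighborhood N of Δ whose maximal (f×f)-invariant subset equals Δ. -/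
theorem stmt14 {X : Type*} [MetricSpace X] [CompactSpace X] (f : X ≃ₜ X) :
    (∃ ρ > (0:ℝ), ∀ x y : X,
        (∀ n : ℕ, dist ((⇑f)^[n] x) ((⇑f)^[n] y) ≤ ρ ∧
          dist ((⇑f.symm)^[n] x) ((⇑f.symm)^[n] y) ≤ ρ) → x = y) ↔
      ∃ N : Set (X × X), IsCompact N ∧ N ∈ nhdsSet {p : X × X | p.1 = p.2} ∧
        {p : X × X | ∀ n : ℕ, (⇑(f.prodCongr f))^[n] p ∈ N ∧
          (⇑(f.prodCongr f).symm)^[n] p ∈ N} = {p : X × X | p.1 = p.2} := by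
  have hfc : ⇑(f.prodCongr f) = Prod.map ⇑f ⇑f := rfl
  have hfs : ⇑(f.prodCongr f).symm = Prod.map ⇑f.symm ⇑f.symm := rfl
  constructor
  · rintro ⟨ρ, hρ, hexp⟩
    refine ⟨{p : X × X | dist p.1 p.2 ≤ ρ}, ?_, ?_, ?_⟩
    · exact (isClosed_le (continuous_fst.dist continuous_snd) continuous_const).isCompact
    · have hop : IsOpen {p : X × X | dist p.1 p.2 < ρ} :=
        isOpen_lt (continuous_fst.dist continuous_snd) continuous_const
      refine Filter.mem_of_superset (hop.mem_nhdsSet.mpr ?_) ?_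
      · intro p hp
        simp only [Set.mem_setOf_eq] at hp ⊢
        rw [hp]; simpa using hρ
      · intro p hp
        exact le_of_lt (show dist p.1 p.2 < ρ from hp)
    · ext ⟨x, y⟩
      simp only [Set.mem_setOf_eq, hfc, hfs, Prod.map_iterate, Prod.map_apply]
      constructor
      · intro h
        exact hexp x y fun n => ⟨(h n).1, (h n).2⟩
      · intro h n
        subst h
        constructor <;> simpa using le_of_lt hρ
  · rintro ⟨N, _, hN, hmax⟩
    rw [show {p : X × X | p.1 = p.2} = Set.diagonal X from rfl,
      nhdsSet_diagonal_eq_uniformity] at hN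
    obtain ⟨ε, hε, hball⟩ := Metric.mem_uniformity_dist.mp hN
    refine ⟨ε / 2, by linarith, fun x y h => ?_⟩
    have : (x, y) ∈ {p : X × X | ∀ n : ℕ, (⇑(f.prodCongr f))^[n] p ∈ N ∧
        (⇑(f.prodCongr f).symm)^[n] p ∈ N} := by
      intro n
      simp only [hfc, hfs, Prod.map_iterate, Prod.map_apply]
      exact ⟨hball (lt_of_le_of_lt (h n).1 (by linarith)),
        hball (lt_of_le_of_lt (h n).2 (by linarith))⟩
    rw [hmax] at this
    exact this
end

section
/- Let X be a compact metric space with no isolated points (and at least one point, hence infinitely many points). Then no homeomorphism f : X → X is positively expansive. -/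
/-- Uniform expansiveness: on a compact space, a positively expansive map
separates points within a uniformly bounded time. -/
private lemma unif_exp {X : Type*} [MetricSpace X] [CompactSpace X]
    {f : X → X} (hf : Continuous f) {ρ : ℝ}
    (hexp : ∀ x y : X, x ≠ y → ∃ n : ℕ, ρ < dist (f^[n] x) (f^[n] y))
    {ε : ℝ} (hε : 0 < ε) :
    ∃ N : ℕ, ∀ x y : X, (∀ n ≤ N, dist (f^[n] x) (f^[n] y) ≤ ρ) → dist x y ≤ ε := by
  by_contra h
  push_neg at h
  set K : ℕ → Set (X × X) := fun N =>
    (⋂ (n : ℕ) (_ : n ≤ N), {p : X × X | dist (f^[n] p.1) (f^[n] p.2) ≤ ρ}) ∩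
      {p : X × X | ε ≤ dist p.1 p.2} with hK
  have hclosed : ∀ N, IsClosed (K N) := by
    intro N
    refine IsClosed.inter (isClosed_iInter fun n => isClosed_iInter fun _ => ?_) ?_
    · exact isClosed_le (Continuous.dist ((hf.iterate n).comp continuous_fst)
        ((hf.iterate n).comp continuous_snd)) continuous_const
    · exact isClosed_le continuous_const (Continuous.dist continuous_fst continuous_snd)
  have hmono : ∀ N, K (N + 1) ⊆ K N := by
    intro N p hp
    refine ⟨?_, hp.2⟩
    have := hp.1
    simp only [Set.mem_iInter] at this ⊢
    intro n hn
    exact this n (hn.trans (Nat.le_succ N))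
  have hne : ∀ N, (K N).Nonempty := by
    intro N
    obtain ⟨x, y, h1, h2⟩ := h N
    refine ⟨(x, y), ?_, h2.le⟩
    simp only [Set.mem_iInter]
    intro n hn
    exact h1 n hn
  obtain ⟨p, hp⟩ := IsCompact.nonempty_iInter_of_sequence_nonempty_isCompact_isClosed
    K hmono hne ((hclosed 0).isCompact) hclosed
  have hp0 : ∀ n : ℕ, dist (f^[n] p.1) (f^[n] p.2) ≤ ρ := by
    intro n
    have := Set.mem_iInter.mp hp n
    have := this.1
    simp only [Set.mem_iInter] at this
    exact this n le_rfl
  have hpε : ε ≤ dist p.1 p.2 := (Set.mem_iInter.mp hp 0).2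
  rcases eq_or_ne p.1 p.2 with heq | hne'
  · rw [heq, dist_self] at hpε; linarith
  · obtain ⟨n, hn⟩ := hexp p.1 p.2 hne'
    exact absurd (hp0 n) (not_le.mpr hn)

/-- Simultaneous uniform continuity of the iterates `g^[n]`, `n ≤ M`. -/
private lemma unif_cont_iter {X : Type*} [MetricSpace X] [CompactSpace X]
    {g : X → X} (hg : Continuous g) (M : ℕ) {c : ℝ} (hc : 0 < c) :
    ∃ δ > (0:ℝ), ∀ n ≤ M, ∀ x y : X, dist x y < δ → dist (g^[n] x) (g^[n] y) ≤ c := by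
  induction M with
  | zero =>
    refine ⟨c, hc, ?_⟩
    intro n hn x y hxy
    interval_cases n
    simpa using hxy.le
  | succ M ih =>
    obtain ⟨δ, hδ, hδ'⟩ := ih
    have hu : UniformContinuous (g^[M + 1]) :=
      CompactSpace.uniformContinuous_of_continuous (hg.iterate (M + 1))
    obtain ⟨δ', hδ'pos, hδ''⟩ := Metric.uniformContinuous_iff.mp hu c hc
    refine ⟨min δ δ', lt_min hδ hδ'pos, ?_⟩
    intro n hn x y hxy
    rcases Nat.lt_or_ge n (M + 1) with h | h
    · exact hδ' n (Nat.lt_succ_iff.mp h) x y (hxy.trans_le (min_le_left _ _))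
    · have : n = M + 1 := le_antisymm hn h
      subst this
      exact (hδ'' (hxy.trans_le (min_le_right _ _))).le

theorem stmt15 {X : Type*} [MetricSpace X] [CompactSpace X] [Nonempty X]
    (hperf : ∀ x : X, ¬ IsOpen ({x} : Set X)) (f : X ≃ₜ X) :
    ¬ ∃ ρ > (0:ℝ), ∀ x y : X, x ≠ y →
      ∃ n : ℕ, ρ < dist ((⇑f)^[n] x) ((⇑f)^[n] y) := by
  classical
  rintro ⟨ρ, hρ, hexp⟩
  have hfc : Continuous (⇑f) := f.continuous
  have hgc : Continuous (⇑f.symm) := f.symm.continuous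
  have hLI : Function.LeftInverse (⇑f.symm) (⇑f) := f.symm_apply_apply
  have hRI : Function.LeftInverse (⇑f) (⇑f.symm) := f.apply_symm_apply
  set g : X → X := ⇑f.symm with hg
  -- cancellation: f^[m] (g^[k] x) = g^[k-m] x for m ≤ k
  have hcancel : ∀ (m k : ℕ), m ≤ k → ∀ x : X, (⇑f)^[m] (g^[k] x) = g^[k - m] x := by
    intro m k hmk x
    conv_lhs => rw [show k = m + (k - m) from (Nat.add_sub_cancel' hmk).symm,
      Function.iterate_add_apply]
    exact (hRI.iterate m) _
  -- X is infinite
  have hinf : Infinite X := by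
    by_contra h
    rw [not_infinite_iff_finite] at h
    obtain ⟨x⟩ := ‹Nonempty X›
    apply hperf x
    have hcl : IsClosed ({x}ᶜ : Set X) := (Set.toFinite _).isClosed
    have := hcl.isOpen_compl
    rwa [compl_compl] at this
  -- ε₀ : modulus for f.symm and target ρ
  obtain ⟨ε0, hε0, hε0'⟩ := unif_cont_iter hgc 1 hρ
  -- N from uniform expansiveness with ε = ε0/2
  obtain ⟨N, hN⟩ := unif_exp hfc hexp (half_pos hε0)
  -- δ : modulus for g^[n], n ≤ N+1, target ρ
  obtain ⟨δ, hδ, hδ'⟩ := unif_cont_iter hgc (N + 1) hρ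
  -- backward orbits of δ-close points stay ρ-close
  have hG : ∀ x y : X, dist x y < δ → ∀ n : ℕ, dist (g^[n] x) (g^[n] y) ≤ ρ := by
    intro x y hxy n
    induction n using Nat.strong_induction_on with
    | _ n ih =>
      rcases le_or_gt n (N + 1) with h | h
      · exact hδ' n h x y hxy
      · -- n ≥ N + 2
        have key : ∀ m ≤ N, dist ((⇑f)^[m] (g^[n - 1] x)) ((⇑f)^[m] (g^[n - 1] y)) ≤ ρ := by
          intro m hm
          rw [hcancel m (n - 1) (by omega), hcancel m (n - 1) (by omega)]
          exact ih (n - 1 - m) (by omega)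
        have h1 : dist (g^[n - 1] x) (g^[n - 1] y) ≤ ε0 / 2 := hN _ _ key
        have h2 : dist (g^[n - 1] x) (g^[n - 1] y) < ε0 := h1.trans_lt (by linarith)
        have h3 := hε0' 1 le_rfl _ _ h2
        simp only [Function.iterate_one] at h3
        have h4 : g (g^[n - 1] x) = g^[n] x := by
          conv_rhs => rw [show n = (n - 1) + 1 by omega]
          rw [Function.iterate_succ_apply']
        have h5 : g (g^[n - 1] y) = g^[n] y := by
          conv_rhs => rw [show n = (n - 1) + 1 by omega]
          rw [Function.iterate_succ_apply']
        rwa [h4, h5] at h3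
  -- backward contraction
  have hcontr : ∀ ε' > (0:ℝ), ∃ M : ℕ, ∀ x y : X, dist x y < δ → ∀ n ≥ M,
      dist (g^[n] x) (g^[n] y) ≤ ε' := by
    intro ε' hε'
    obtain ⟨N', hN'⟩ := unif_exp hfc hexp hε'
    refine ⟨N', fun x y hxy n hn => ?_⟩
    refine hN' _ _ fun m hm => ?_
    rw [hcancel m n (hm.trans hn), hcancel m n (hm.trans hn)]
    exact hG x y hxy (n - m)
  -- finite cover by δ/2-balls
  obtain ⟨t, ht⟩ := IsCompact.elim_finite_subcover (isCompact_univ (X := X))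
    (fun z => Metric.ball z (δ / 2)) (fun z => Metric.isOpen_ball)
    (fun x _ => Set.mem_iUnion.mpr ⟨x, Metric.mem_ball_self (by linarith)⟩)
  have hcov : ∀ u : X, ∃ z ∈ t, u ∈ Metric.ball z (δ / 2) := by
    intro u
    have := ht (Set.mem_univ u)
    simpa using this
  have htne : 0 < t.card := by
    obtain ⟨z, hz, _⟩ := hcov (Classical.arbitrary X)
    exact Finset.card_pos.mpr ⟨z, hz⟩
  -- t.card + 1 distinct points
  obtain ⟨s, hs⟩ := Infinite.exists_subset_card_eq X (t.card + 1)
  -- minimum pairwise distance in s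
  have hsne : s.offDiag.Nonempty := by
    have h2 : 1 < s.card := by omega
    obtain ⟨a, ha, b, hb, hab⟩ := Finset.one_lt_card.mp h2
    exact ⟨(a, b), Finset.mem_offDiag.mpr ⟨ha, hb, hab⟩⟩
  set d0 : ℝ := s.offDiag.inf' hsne (fun p => dist p.1 p.2) with hd0
  have hd0pos : 0 < d0 := by
    rw [hd0, Finset.lt_inf'_iff]
    intro p hp
    exact dist_pos.mpr (Finset.mem_offDiag.mp hp).2.2
  obtain ⟨M, hM⟩ := hcontr (d0 / 2) (by linarith)
  -- center-choice function
  set ctr : X → X := fun w => Classical.choose (hcov ((⇑f)^[M] w)) with hctr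
  have hctr_mem : ∀ w, ctr w ∈ t := fun w => (Classical.choose_spec (hcov ((⇑f)^[M] w))).1
  have hctr_ball : ∀ w, (⇑f)^[M] w ∈ Metric.ball (ctr w) (δ / 2) :=
    fun w => (Classical.choose_spec (hcov ((⇑f)^[M] w))).2
  obtain ⟨a, ha, b, hb, hab, habeq⟩ :=
    Finset.exists_ne_map_eq_of_card_lt_of_maps_to (by omega : t.card < s.card)
      (fun w _ => hctr_mem w)
  -- f^[M] a and f^[M] b are δ-close
  have hclose : dist ((⇑f)^[M] a) ((⇑f)^[M] b) < δ := by
    have h1 := hctr_ball a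
    have h2 := hctr_ball b
    rw [Metric.mem_ball] at h1 h2
    calc dist ((⇑f)^[M] a) ((⇑f)^[M] b)
        ≤ dist ((⇑f)^[M] a) (ctr a) + dist (ctr a) ((⇑f)^[M] b) := dist_triangle _ _ _
      _ < δ / 2 + δ / 2 := by rw [habeq] at *; exact add_lt_add h1 (by rwa [dist_comm])
      _ = δ := by ring
  -- pull back: dist a b ≤ d0/2, contradiction with dist a b ≥ d0
  have hback := hM _ _ hclose M le_rfl
  have hinv : ∀ w : X, g^[M] ((⇑f)^[M] w) = w := fun w => (hLI.iterate M) w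
  rw [hinv a, hinv b] at hback
  have : d0 ≤ dist a b :=
    Finset.inf'_le (fun p : X × X => dist p.1 p.2)
      (Finset.mem_offDiag.mpr ⟨ha, hb, hab⟩ : (a, b) ∈ s.offDiag)
  linarith
end

section
/- Let X be a compact metric space and f : X → X a positively expansive homeomorphism. Then every point of X is isolated. -/
theorem stmt19 {X : Type*} [MetricSpace X] [CompactSpace X] (f : X ≃ₜ X)
    (hexp : ∃ ρ > (0:ℝ), ∀ x y : X, x ≠ y →
      ∃ n : ℕ, ρ < dist ((⇑f)^[n] x) ((⇑f)^[n] y)) :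
    ∀ x : X, IsOpen ({x} : Set X) := by
  classical
  obtain ⟨ρ, hρ, hexp⟩ := hexp
  suffices hfin : Finite X by
    intro x
    have h1 : IsClosed ({x}ᶜ : Set X) := (Set.toFinite _).isClosed
    exact compl_compl ({x} : Set X) ▸ h1.isOpen_compl

  set g : X → X := ⇑f.symm with hg
  have hLI : Function.LeftInverse ⇑f g := f.apply_symm_apply
  have hRI : Function.LeftInverse g ⇑f := f.symm_apply_apply
  have hiter : ∀ n j : ℕ, n ≤ j → ∀ x : X, (⇑f)^[n] (g^[j] x) = g^[j-n] x := by
    intro n j hnj x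
    have h : g^[j] x = g^[n] (g^[j-n] x) := by
      rw [← Function.iterate_add_apply]
      congr 1
      omega
    rw [h, (hLI.iterate n) _]
  -- uniform expansiveness
  have UE : ∀ τ > (0:ℝ), ∃ N : ℕ, ∀ u v : X,
      (∀ n ≤ N, dist ((⇑f)^[n] u) ((⇑f)^[n] v) ≤ ρ) → dist u v < τ := by
    intro τ hτ
    by_contra hcon
    push_neg at hcon
    set K : ℕ → Set (X × X) := fun N =>
      {p | τ ≤ dist p.1 p.2 ∧ ∀ n ≤ N, dist ((⇑f)^[n] p.1) ((⇑f)^[n] p.2) ≤ ρ} with hK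
    have hclosed : ∀ N, IsClosed (K N) := by
      intro N
      have h1 : IsClosed {p : X × X | τ ≤ dist p.1 p.2} :=
        isClosed_le continuous_const (continuous_fst.dist continuous_snd)
      have h2 : ∀ n : ℕ, IsClosed {p : X × X |
          dist ((⇑f)^[n] p.1) ((⇑f)^[n] p.2) ≤ ρ} := fun n =>
        isClosed_le (Continuous.dist (((f.continuous.iterate n)).comp continuous_fst)
          (((f.continuous.iterate n)).comp continuous_snd)) continuous_const
      have heq : K N = {p : X × X | τ ≤ dist p.1 p.2} ∩
          ⋂ n ∈ Finset.range (N+1), {p : X × X |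
            dist ((⇑f)^[n] p.1) ((⇑f)^[n] p.2) ≤ ρ} := by
        ext p
        simp [hK, Nat.lt_succ_iff]
      rw [heq]
      exact h1.inter (isClosed_biInter fun n _ => h2 n)
    have hne : ∀ N, (K N).Nonempty := by
      intro N
      obtain ⟨u, v, h1, h2⟩ := hcon N
      exact ⟨(u, v), h2, h1⟩
    have hdec : ∀ N, K (N+1) ⊆ K N := by
      intro N p hp
      exact ⟨hp.1, fun n hn => hp.2 n (by omega)⟩
    obtain ⟨⟨u, v⟩, hm⟩ := IsCompact.nonempty_iInter_of_sequence_nonempty_isCompact_isClosed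
      K hdec hne ((hclosed 0).isCompact) hclosed
    simp only [Set.mem_iInter] at hm
    have huv : u ≠ v := by
      have h0 : (0:ℝ) < dist u v := lt_of_lt_of_le hτ (hm 0).1
      exact fun h => by simp [h] at h0
    obtain ⟨n, hn⟩ := hexp u v huv
    exact absurd ((hm n).2 n le_rfl) (not_le.mpr hn)
  -- uniform continuity of the inverse
  have hgc : UniformContinuous g := CompactSpace.uniformContinuous_of_continuous f.symm.continuous
  obtain ⟨δ₁, hδ₁, hδc⟩ := Metric.uniformContinuous_iff.mp hgc ρ hρ
  set δ : ℝ := min (δ₁/2) ρ with hδdef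
  have hδpos : 0 < δ := lt_min (by linarith) hρ
  have hδρ : δ ≤ ρ := min_le_right _ _
  have hδcont : ∀ u v : X, dist u v ≤ δ → dist (g u) (g v) ≤ ρ := by
    intro u v h
    exact le_of_lt (hδc (lt_of_le_of_lt (h.trans (min_le_left _ _)) (by linarith)))
  obtain ⟨N, hN⟩ := UE δ hδpos
  -- Lemma A : backward invariance
  have lemA : ∀ u v : X, (∀ i ≤ N, dist (g^[i] u) (g^[i] v) ≤ δ) →
      ∀ j, dist (g^[j] u) (g^[j] v) ≤ δ := by
    intro u v hseed j
    induction j using Nat.strong_induction_on with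
    | _ j ih =>
      rcases le_or_gt j N with hj | hj
      · exact hseed j hj
      · have key : ∀ n ≤ N, dist ((⇑f)^[n] (g^[j] u)) ((⇑f)^[n] (g^[j] v)) ≤ ρ := by
          intro n hn
          rcases Nat.eq_zero_or_pos n with h0 | h1
          · subst h0
            simp only [Function.iterate_zero, id]
            have e1 : g^[j] u = g (g^[j-1] u) := by
              conv_lhs => rw [show j = (j-1)+1 by omega]
              rw [Function.iterate_succ_apply']
            have e2 : g^[j] v = g (g^[j-1] v) := by
              conv_lhs => rw [show j = (j-1)+1 by omega]
              rw [Function.iterate_succ_apply']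
            rw [e1, e2]
            exact hδcont _ _ (ih (j-1) (by omega))
          · rw [hiter n j (by omega), hiter n j (by omega)]
            exact (ih (j-n) (by omega)).trans hδρ
        exact le_of_lt (hN _ _ key)
  -- the open cover
  set O : X → Set X := fun u => {v | ∀ i ≤ N, dist (g^[i] u) (g^[i] v) < δ/2} with hO
  have hOopen : ∀ u, IsOpen (O u) := by
    intro u
    have heq : O u = ⋂ i ∈ Finset.range (N+1),
        {v : X | dist (g^[i] u) (g^[i] v) < δ/2} := by
      ext v
      simp [hO, Nat.lt_succ_iff]
    rw [heq]
    exact isOpen_biInter_finset fun i _ =>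
      isOpen_lt (Continuous.dist continuous_const (f.symm.continuous.iterate i)) continuous_const
  have hcover : (Set.univ : Set X) ⊆ ⋃ u, O u := by
    intro x _
    exact Set.mem_iUnion.mpr ⟨x, fun i _ => by simpa using half_pos hδpos⟩
  obtain ⟨t, ht⟩ := isCompact_univ.elim_finite_subcover O hOopen hcover
  -- finiteness by pigeonhole
  by_contra hinf
  rw [not_finite_iff_infinite] at hinf
  obtain ⟨s, -, hscard⟩ := Infinite.exists_superset_card_eq (∅ : Finset X) (t.card + 1) (by simp)
  have hs2 : 1 < s.card := by
    have hx : X := Classical.arbitrary X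
    have : t.Nonempty := by
      have := ht (Set.mem_univ hx)
      simp only [Set.mem_iUnion] at this
      obtain ⟨u, hu, -⟩ := this
      exact ⟨u, hu⟩
    have := Finset.card_pos.mpr this
    omega
  obtain ⟨a0, ha0, b0, hb0, hab0⟩ := Finset.one_lt_card.mp hs2
  have hDne : (s.offDiag.image fun p => dist p.1 p.2).Nonempty :=
    ⟨dist a0 b0, Finset.mem_image.mpr ⟨(a0, b0), Finset.mem_offDiag.mpr ⟨ha0, hb0, hab0⟩, rfl⟩⟩
  set τ : ℝ := (s.offDiag.image fun p => dist p.1 p.2).min' hDne with hτdef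
  have hτpos : 0 < τ := by
    have := Finset.min'_mem (s.offDiag.image fun p => dist p.1 p.2) hDne
    obtain ⟨⟨p, q⟩, hpq, hd⟩ := Finset.mem_image.mp this
    obtain ⟨-, -, hne⟩ := Finset.mem_offDiag.mp hpq
    rw [hτdef, ← hd]
    exact dist_pos.mpr hne
  have hτle : ∀ a ∈ s, ∀ b ∈ s, a ≠ b → τ ≤ dist a b := by
    intro a ha b hb hab
    exact Finset.min'_le _ _ (Finset.mem_image.mpr
      ⟨(a, b), Finset.mem_offDiag.mpr ⟨ha, hb, hab⟩, rfl⟩)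
  obtain ⟨J, hJ⟩ := UE τ hτpos
  have hc : ∀ y : X, ∃ u, u ∈ t ∧ (⇑f)^[J] y ∈ O u := by
    intro y
    have := ht (Set.mem_univ ((⇑f)^[J] y))
    simp only [Set.mem_iUnion] at this
    obtain ⟨u, hu, hyu⟩ := this
    exact ⟨u, hu, hyu⟩
  choose c hct hcO using hc
  obtain ⟨a, ha, b, hb, hab, hcab⟩ := Finset.exists_ne_map_eq_of_card_lt_of_maps_to
    (by omega : t.card < s.card) (fun y _ => hct y)
  have hva : ∀ i ≤ N, dist (g^[i] (c a)) (g^[i] ((⇑f)^[J] a)) < δ/2 := hcO a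
  have hvb : ∀ i ≤ N, dist (g^[i] (c a)) (g^[i] ((⇑f)^[J] b)) < δ/2 := by
    rw [hcab]; exact hcO b
  have hpair : ∀ i ≤ N, dist (g^[i] ((⇑f)^[J] a)) (g^[i] ((⇑f)^[J] b)) ≤ δ := by
    intro i hi
    have h1 := hva i hi
    have h2 := hvb i hi
    have := dist_triangle (g^[i] ((⇑f)^[J] a)) (g^[i] (c a)) (g^[i] ((⇑f)^[J] b))
    rw [dist_comm (g^[i] ((⇑f)^[J] a)) (g^[i] (c a))] at this
    linarith
  have hAll : ∀ j, dist (g^[j] ((⇑f)^[J] a)) (g^[j] ((⇑f)^[J] b)) ≤ δ := lemA _ _ hpair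
  have hfinal : dist (g^[J] ((⇑f)^[J] a)) (g^[J] ((⇑f)^[J] b)) < τ := by
    apply hJ
    intro n hn
    rw [hiter n J hn, hiter n J hn]
    exact (hAll (J - n)).trans hδρ
  rw [hRI.iterate J _, hRI.iterate J _] at hfinal
  exact absurd hfinal (not_lt.mpr (hτle a ha b hb hab))
end
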